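/- arXiv:1908.08910 — 2 statements merged into one kernel-verified Lean document; each statement's English description precedes it below -/
import Mathlib

section
/- For each fixed k ≥ 1, the generating function F_k(x) = ∑_{n≥1} f(n,k) xⁿ, where f(n,k) is the number of pop-stacked permutations of [n] with exactly k ascending runs, is a rational function. -/
/-- The maximal descending runs of a list, in order. -/
def descRuns : List ℕ → List (List ℕ)
  | [] => []
  | a :: l =>
    match descRuns l with
    | (b :: r) :: rs => if b < a then (a :: b :: r) :: rs else [a] :: (b :: r) :: rs
    | _ => [[a]]

/-- The maximal ascending runs of a list, in order. -/
def ascRuns : List ℕ → List (List ℕ)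
  | [] => []
  | a :: l =>
    match ascRuns l with
    | (b :: r) :: rs => if a < b then (a :: b :: r) :: rs else [a] :: (b :: r) :: rs
    | _ => [[a]]

/-- The pop-stack operator: reverse each maximal descending run. -/
def popStack (l : List ℕ) : List ℕ := ((descRuns l).map List.reverse).flatten

/-- `l` is (the one-line notation of) a permutation of `[n] = {1,…,n}`. -/
def IsPermOf (n : ℕ) (l : List ℕ) : Prop := l.Perm (List.range' 1 n)

/-- Minimum of a list of naturals. -/
noncomputable def lmin (l : List ℕ) : ℕ := sInf {x | x ∈ l}

/-- Maximum of a list of naturals. -/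
def lmax (l : List ℕ) : ℕ := l.foldr max 0

/-- Minimum of a finset of naturals. -/
noncomputable def bmin (B : Finset ℕ) : ℕ := sInf (B : Set ℕ)

/-- Maximum of a finset of naturals. -/
def bmax (B : Finset ℕ) : ℕ := B.sup id

/-- A ballot (ordered set partition) with underlying set `U`. -/
def IsBallot (U : Finset ℕ) (l : List (Finset ℕ)) : Prop :=
  (∀ B ∈ l, B.Nonempty) ∧ l.Pairwise Disjoint ∧ l.foldr (· ∪ ·) ∅ = U

/-- A ballot is overlapping if adjacent blocks satisfy
`max Bᵢ > min Bᵢ₊₁` and `min Bᵢ < max Bᵢ₊₁`. -/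
def Overlapping (l : List (Finset ℕ)) : Prop :=
  l.Chain' fun B C => bmin C < bmax B ∧ bmin B < bmax C

/-- `σ` is pop-stacked: it is the image of some permutation of `[n]` under `popStack`. -/
def IsPopStacked (n : ℕ) (σ : List ℕ) : Prop :=
  ∃ π, IsPermOf n π ∧ popStack π = σ

/-- `f_{c,d}(n)`: overlapping ballots of `[n]` whose last block has min `c` and max `d`. -/
noncomputable def fcd (c d n : ℕ) : ℕ :=
  Nat.card {l : List (Finset ℕ) // IsBallot (Finset.Icc 1 n) l ∧ Overlapping l ∧
    ∃ B, l.getLast? = some B ∧ bmin B = c ∧ bmax B = d}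

/-- `f_{c,d}(n,k)`: overlapping ballots of `[n]` with `k` blocks whose last block has
min `c` and max `d`. -/
noncomputable def fcdk (c d n k : ℕ) : ℕ :=
  Nat.card {l : List (Finset ℕ) // IsBallot (Finset.Icc 1 n) l ∧ Overlapping l ∧
    l.length = k ∧ ∃ B, l.getLast? = some B ∧ bmin B = c ∧ bmax B = d}

/-- The number of pop-stacked permutations of `[n]`. -/
noncomputable def popCount (n : ℕ) : ℕ :=
  Nat.card {σ : List ℕ // IsPermOf n σ ∧ IsPopStacked n σ}

/-- The number of pop-stacked permutations of `[n]` with exactly `k` ascending runs. -/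
noncomputable def popCountK (n k : ℕ) : ℕ :=
  Nat.card {σ : List ℕ // IsPermOf n σ ∧ IsPopStacked n σ ∧ (ascRuns σ).length = k}

/-- Greedy sorting with a pop-stack whose contents increase from top to bottom:
push when possible, otherwise pop the whole stack. -/
def greedyPop : List ℕ → List ℕ → List ℕ
  | stack, [] => stack
  | [], a :: rest => greedyPop [a] rest
  | t :: s, a :: rest =>
    if a < t then greedyPop (a :: t :: s) rest
    else (t :: s) ++ greedyPop [a] rest

abbrev lst (l : List ℕ) : ℕ := l.getLastD 0

lemma ascRuns_cons_of_eq {l : List ℕ} {b : ℕ} {r : List ℕ} {rs : List (List ℕ)}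
    (hm : ascRuns l = (b :: r) :: rs) (a : ℕ) :
    ascRuns (a :: l) = if a < b then (a :: b :: r) :: rs else [a] :: (b :: r) :: rs := by
  rw [ascRuns, hm]

lemma ascRuns_cons_of_nil {l : List ℕ} (hm : ascRuns l = []) (a : ℕ) :
    ascRuns (a :: l) = [[a]] := by
  rw [ascRuns, hm]

lemma descRuns_cons_of_eq {l : List ℕ} {b : ℕ} {r : List ℕ} {rs : List (List ℕ)}
    (hm : descRuns l = (b :: r) :: rs) (a : ℕ) :
    descRuns (a :: l) = if b < a then (a :: b :: r) :: rs else [a] :: (b :: r) :: rs := by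
  rw [descRuns, hm]

lemma descRuns_cons_of_nil {l : List ℕ} (hm : descRuns l = []) (a : ℕ) :
    descRuns (a :: l) = [[a]] := by
  rw [descRuns, hm]

lemma ascRuns_eq_nil_iff {l : List ℕ} : ascRuns l = [] ↔ l = [] := by
  constructor
  · intro h
    cases l with
    | nil => rfl
    | cons a l =>
      exfalso
      rcases hm : ascRuns l with _ | ⟨_ | ⟨b, r⟩, rs⟩
      · rw [ascRuns_cons_of_nil hm] at h; simp at h
      · rw [ascRuns, hm] at h; simp at h
      · rw [ascRuns_cons_of_eq hm] at h; split at h <;> simp at h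
  · rintro rfl; rfl

lemma descRuns_eq_nil_iff {l : List ℕ} : descRuns l = [] ↔ l = [] := by
  constructor
  · intro h
    cases l with
    | nil => rfl
    | cons a l =>
      exfalso
      rcases hm : descRuns l with _ | ⟨_ | ⟨b, r⟩, rs⟩
      · rw [descRuns_cons_of_nil hm] at h; simp at h
      · rw [descRuns, hm] at h; simp at h
      · rw [descRuns_cons_of_eq hm] at h; split at h <;> simp at h
  · rintro rfl; rfl

lemma ascRuns_ne_nil {l R : List ℕ} (h : R ∈ ascRuns l) : R ≠ [] := by
  induction l generalizing R with
  | nil => simp [ascRuns] at h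
  | cons a l ih =>
    rcases hm : ascRuns l with _ | ⟨_ | ⟨b, r⟩, rs⟩
    · rw [ascRuns_cons_of_nil hm] at h; simp at h; simp [h]
    · exact absurd rfl (ih (hm ▸ List.mem_cons_self (a := ([]:List ℕ))))
    · rw [ascRuns_cons_of_eq hm] at h
      split at h <;> rcases List.mem_cons.1 h with rfl | h'
      · simp
      · exact ih (hm ▸ List.mem_cons_of_mem _ h')
      · simp
      · exact ih (hm ▸ h')

lemma descRuns_ne_nil {l R : List ℕ} (h : R ∈ descRuns l) : R ≠ [] := by
  induction l generalizing R with
  | nil => simp [descRuns] at h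
  | cons a l ih =>
    rcases hm : descRuns l with _ | ⟨_ | ⟨b, r⟩, rs⟩
    · rw [descRuns_cons_of_nil hm] at h; simp at h; simp [h]
    · exact absurd rfl (ih (hm ▸ List.mem_cons_self (a := ([]:List ℕ))))
    · rw [descRuns_cons_of_eq hm] at h
      split at h <;> rcases List.mem_cons.1 h with rfl | h'
      · simp
      · exact ih (hm ▸ List.mem_cons_of_mem _ h')
      · simp
      · exact ih (hm ▸ h')

lemma ascRuns_flatten (l : List ℕ) : (ascRuns l).flatten = l := by
  induction l with
  | nil => rfl
  | cons a l ih =>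
    rcases hm : ascRuns l with _ | ⟨_ | ⟨b, r⟩, rs⟩
    · rw [ascRuns_cons_of_nil hm]
      rw [hm] at ih; simp_all
    · exact absurd (ascRuns_ne_nil (hm ▸ List.mem_cons_self)) (by simp)
    · rw [ascRuns_cons_of_eq hm]
      rw [hm] at ih
      split <;> simp_all

lemma descRuns_flatten (l : List ℕ) : (descRuns l).flatten = l := by
  induction l with
  | nil => rfl
  | cons a l ih =>
    rcases hm : descRuns l with _ | ⟨_ | ⟨b, r⟩, rs⟩
    · rw [descRuns_cons_of_nil hm]
      rw [hm] at ih; simp_all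
    · exact absurd (descRuns_ne_nil (hm ▸ List.mem_cons_self)) (by simp)
    · rw [descRuns_cons_of_eq hm]
      rw [hm] at ih
      split <;> simp_all

lemma ascRuns_chain {l R : List ℕ} (h : R ∈ ascRuns l) : R.IsChain (· < ·) := by
  induction l generalizing R with
  | nil => simp [ascRuns] at h
  | cons a l ih =>
    rcases hm : ascRuns l with _ | ⟨_ | ⟨b, r⟩, rs⟩
    · rw [ascRuns_cons_of_nil hm] at h; simp at h; simp [h]
    · exact absurd (ascRuns_ne_nil (hm ▸ List.mem_cons_self)) (by simp)
    · rw [ascRuns_cons_of_eq hm] at h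
      split at h <;> rcases List.mem_cons.1 h with rfl | h'
      · exact List.IsChain.cons_cons (by assumption) (ih (hm ▸ List.mem_cons_self))
      · exact ih (hm ▸ List.mem_cons_of_mem _ h')
      · simp
      · exact ih (hm ▸ h')

lemma descRuns_chain {l R : List ℕ} (h : R ∈ descRuns l) : R.IsChain (· > ·) := by
  induction l generalizing R with
  | nil => simp [descRuns] at h
  | cons a l ih =>
    rcases hm : descRuns l with _ | ⟨_ | ⟨b, r⟩, rs⟩
    · rw [descRuns_cons_of_nil hm] at h; simp at h; simp [h]
    · exact absurd (descRuns_ne_nil (hm ▸ List.mem_cons_self)) (by simp)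
    · rw [descRuns_cons_of_eq hm] at h
      split at h <;> rcases List.mem_cons.1 h with rfl | h'
      · exact List.IsChain.cons_cons (by assumption) (ih (hm ▸ List.mem_cons_self))
      · exact ih (hm ▸ List.mem_cons_of_mem _ h')
      · simp
      · exact ih (hm ▸ h')

lemma lst_cons {a : ℕ} {t : List ℕ} (h : t ≠ []) : lst (a :: t) = lst t := by
  cases t with
  | nil => simp at h
  | cons b u => simp [List.getLastD_cons]

lemma lst_append {s t : List ℕ} (h : t ≠ []) : lst (s ++ t) = lst t := by
  induction s with
  | nil => rfl
  | cons a s ih =>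
    have : s ++ t ≠ [] := by simp [h]
    rw [List.cons_append, lst_cons this, ih]

lemma headI_eq (l : List ℕ) : l.headI = l.head?.getD 0 := by cases l <;> simp

lemma lst_eq (l : List ℕ) : lst l = (l.getLast?).getD 0 := by
  simp [List.getLastD_eq_getLast?]

lemma headI_reverse (l : List ℕ) : l.reverse.headI = lst l := by
  rw [headI_eq, lst_eq, List.head?_reverse]

lemma lst_reverse (l : List ℕ) : lst l.reverse = l.headI := by
  rw [headI_eq, lst_eq, List.getLast?_reverse]

lemma headI_mem {l : List ℕ} (h : l ≠ []) : l.headI ∈ l := by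
  cases l with
  | nil => simp at h
  | cons a t => simp

lemma lst_mem {l : List ℕ} (h : l ≠ []) : lst l ∈ l := by
  induction l with
  | nil => simp at h
  | cons a t ih =>
    cases t with
    | nil => simp [lst]
    | cons b u =>
      rw [lst_cons (by simp : (b :: u) ≠ [])]
      exact List.mem_cons_of_mem _ (ih (by simp))

lemma headI_le_lst {l : List ℕ} (h : l ≠ []) (hc : l.IsChain (· < ·)) : l.headI ≤ lst l := by
  induction l with
  | nil => simp at h
  | cons a t ih =>
    cases t with
    | nil => simp [lst]
    | cons b u =>
      have h1 : a < b := (List.isChain_cons_cons.1 hc).1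
      have h2 := ih (by simp) (List.isChain_cons_cons.1 hc).2
      rw [lst_cons (by simp : (b :: u) ≠ [])]
      simp only [List.headI] at h2 ⊢
      omega

lemma headI_le_of_mem {l : List ℕ} {a : ℕ} (hc : l.IsChain (· < ·)) (h : a ∈ l) :
    l.headI ≤ a := by
  induction l with
  | nil => simp at h
  | cons b t ih =>
    rcases List.mem_cons.1 h with rfl | h'
    · simp
    · simp only [List.headI]
      rcases List.isChain_cons.1 hc with ⟨hb, hc'⟩
      cases t with
      | nil => simp at h'
      | cons c u =>
        have h1 : b < c := hb c rfl
        have h2 := ih hc' h'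
        simp only [List.headI] at h2
        omega

lemma le_lst_of_mem {l : List ℕ} {a : ℕ} (hc : l.IsChain (· < ·)) (h : a ∈ l) :
    a ≤ lst l := by
  induction l with
  | nil => simp at h
  | cons b t ih =>
    rcases List.isChain_cons.1 hc with ⟨hb, hc'⟩
    rcases List.mem_cons.1 h with rfl | h'
    · cases t with
      | nil => simp [lst]
      | cons c u =>
        have h1 : a < c := hb c rfl
        have h2 := headI_le_lst (by simp : (c :: u) ≠ []) hc'
        rw [lst_cons (by simp : (c :: u) ≠ [])]
        simp only [List.headI] at h2
        omega
    · rw [lst_cons (List.ne_nil_of_mem h')]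
      exact ih hc' h'

lemma ascRuns_of_chain {s : List ℕ} (hs : s ≠ []) (hc : s.IsChain (· < ·)) :
    ascRuns s = [s] := by
  induction s with
  | nil => simp at hs
  | cons a t ih =>
    cases t with
    | nil => rfl
    | cons b u =>
      have h1 : a < b := (List.isChain_cons_cons.1 hc).1
      have h2 := ih (by simp) (List.isChain_cons_cons.1 hc).2
      rw [ascRuns_cons_of_eq h2, if_pos h1]

lemma descRuns_of_chain {s : List ℕ} (hs : s ≠ []) (hc : s.IsChain (· > ·)) :
    descRuns s = [s] := by
  induction s with
  | nil => simp at hs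
  | cons a t ih =>
    cases t with
    | nil => rfl
    | cons b u =>
      have h1 : b < a := (List.isChain_cons_cons.1 hc).1
      have h2 := ih (by simp) (List.isChain_cons_cons.1 hc).2
      rw [descRuns_cons_of_eq h2, if_pos h1]

lemma ascRuns_append_merge {s m : List ℕ} {b : ℕ} {r : List ℕ} {rs : List (List ℕ)}
    (hs : s ≠ []) (hc : s.IsChain (· < ·)) (hm : ascRuns m = (b :: r) :: rs)
    (hlt : lst s < b) : ascRuns (s ++ m) = (s ++ b :: r) :: rs := by
  induction s with
  | nil => simp at hs
  | cons a t ih =>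
    cases t with
    | nil =>
      simp only [List.singleton_append]
      rw [ascRuns_cons_of_eq hm, if_pos (by simpa [lst] using hlt)]
    | cons a' t' =>
      have h1 : a < a' := (List.isChain_cons_cons.1 hc).1
      have h2 := ih (by simp) (List.isChain_cons_cons.1 hc).2
        (by rwa [lst_cons (by simp : (a' :: t') ≠ [])] at hlt)
      rw [List.cons_append, ascRuns_cons_of_eq (by simpa using h2), if_pos h1]
      simp

lemma ascRuns_append_split {s m : List ℕ} {b : ℕ} {r : List ℕ} {rs : List (List ℕ)}
    (hs : s ≠ []) (hc : s.IsChain (· < ·)) (hm : ascRuns m = (b :: r) :: rs)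
    (hge : ¬ lst s < b) : ascRuns (s ++ m) = s :: (b :: r) :: rs := by
  induction s with
  | nil => simp at hs
  | cons a t ih =>
    cases t with
    | nil =>
      simp only [List.singleton_append]
      rw [ascRuns_cons_of_eq hm, if_neg (by simpa [lst] using hge)]
    | cons a' t' =>
      have h1 : a < a' := (List.isChain_cons_cons.1 hc).1
      have h2 := ih (by simp) (List.isChain_cons_cons.1 hc).2
        (by rwa [lst_cons (by simp : (a' :: t') ≠ [])] at hge)
      rw [List.cons_append, ascRuns_cons_of_eq (by simpa using h2), if_pos h1]

lemma descRuns_append_merge {s m : List ℕ} {b : ℕ} {r : List ℕ} {rs : List (List ℕ)}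
    (hs : s ≠ []) (hc : s.IsChain (· > ·)) (hm : descRuns m = (b :: r) :: rs)
    (hlt : b < lst s) : descRuns (s ++ m) = (s ++ b :: r) :: rs := by
  induction s with
  | nil => simp at hs
  | cons a t ih =>
    cases t with
    | nil =>
      simp only [List.singleton_append]
      rw [descRuns_cons_of_eq hm, if_pos (by simpa [lst] using hlt)]
    | cons a' t' =>
      have h1 : a' < a := (List.isChain_cons_cons.1 hc).1
      have h2 := ih (by simp) (List.isChain_cons_cons.1 hc).2
        (by rwa [lst_cons (by simp : (a' :: t') ≠ [])] at hlt)
      rw [List.cons_append, descRuns_cons_of_eq (by simpa using h2), if_pos h1]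
      simp

lemma descRuns_append_split {s m : List ℕ} {b : ℕ} {r : List ℕ} {rs : List (List ℕ)}
    (hs : s ≠ []) (hc : s.IsChain (· > ·)) (hm : descRuns m = (b :: r) :: rs)
    (hge : ¬ b < lst s) : descRuns (s ++ m) = s :: (b :: r) :: rs := by
  induction s with
  | nil => simp at hs
  | cons a t ih =>
    cases t with
    | nil =>
      simp only [List.singleton_append]
      rw [descRuns_cons_of_eq hm, if_neg (by simpa [lst] using hge)]
    | cons a' t' =>
      have h1 : a' < a := (List.isChain_cons_cons.1 hc).1
      have h2 := ih (by simp) (List.isChain_cons_cons.1 hc).2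
        (by rwa [lst_cons (by simp : (a' :: t') ≠ [])] at hge)
      rw [List.cons_append, descRuns_cons_of_eq (by simpa using h2), if_pos h1]

/-- Characterization: a decomposition into nonempty increasing segments with
non-ascents at the boundaries is exactly `ascRuns`. -/
lemma ascRuns_flatten_eq (ss : List (List ℕ)) (h1 : ∀ s ∈ ss, s ≠ [])
    (h2 : ∀ s ∈ ss, s.IsChain (· < ·))
    (h3 : ss.IsChain (fun s t => ¬ lst s < t.headI)) :
    ascRuns ss.flatten = ss := by
  induction ss with
  | nil => rfl
  | cons s ss ih =>
    have hs := h1 s (by simp)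
    have hcs := h2 s (by simp)
    cases ss with
    | nil => simpa using ascRuns_of_chain hs hcs
    | cons t ts =>
      have ht := h1 t (by simp)
      have iheq : ascRuns (t :: ts).flatten = t :: ts :=
        ih (fun x hx => h1 x (List.mem_cons_of_mem _ hx))
           (fun x hx => h2 x (List.mem_cons_of_mem _ hx))
           (List.isChain_cons.1 h3).2
      obtain ⟨b, r, rfl⟩ : ∃ b r, t = b :: r := by
        cases t with
        | nil => simp at ht
        | cons b r => exact ⟨b, r, rfl⟩
      have hge : ¬ lst s < b := by
        have := (List.isChain_cons_cons.1 h3).1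
        simpa using this
      simpa using ascRuns_append_split hs hcs iheq hge

lemma descRuns_flatten_eq (ss : List (List ℕ)) (h1 : ∀ s ∈ ss, s ≠ [])
    (h2 : ∀ s ∈ ss, s.IsChain (· > ·))
    (h3 : ss.IsChain (fun s t => ¬ t.headI < lst s)) :
    descRuns ss.flatten = ss := by
  induction ss with
  | nil => rfl
  | cons s ss ih =>
    have hs := h1 s (by simp)
    have hcs := h2 s (by simp)
    cases ss with
    | nil => simpa using descRuns_of_chain hs hcs
    | cons t ts =>
      have ht := h1 t (by simp)
      have iheq : descRuns (t :: ts).flatten = t :: ts :=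
        ih (fun x hx => h1 x (List.mem_cons_of_mem _ hx))
           (fun x hx => h2 x (List.mem_cons_of_mem _ hx))
           (List.isChain_cons.1 h3).2
      obtain ⟨b, r, rfl⟩ : ∃ b r, t = b :: r := by
        cases t with
        | nil => simp at ht
        | cons b r => exact ⟨b, r, rfl⟩
      have hge : ¬ b < lst s := by
        have := (List.isChain_cons_cons.1 h3).1
        simpa using this
      simpa using descRuns_append_split hs hcs iheq hge

/-- Boundaries of ascending runs of a duplicate-free list are strict descents. -/
lemma ascRuns_boundary {l : List ℕ} (h : l.Nodup) :
    (ascRuns l).IsChain (fun R S => S.headI < lst R) := by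
  induction l with
  | nil => simp [ascRuns]
  | cons a l ih =>
    have hal : a ∉ l := (List.nodup_cons.1 h).1
    have hnd : l.Nodup := (List.nodup_cons.1 h).2
    rcases hm : ascRuns l with _ | ⟨⟨⟩ | ⟨b, r⟩, rs⟩
    · rw [ascRuns_cons_of_nil hm]; simp
    · exact absurd rfl (ascRuns_ne_nil (hm ▸ List.mem_cons_self))
    · have ihc := ih hnd
      rw [hm] at ihc
      have hbl : b ∈ l := by
        have : b ∈ (ascRuns l).flatten := by
          rw [hm]; simp
        rwa [ascRuns_flatten] at this
      rw [ascRuns_cons_of_eq hm]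
      split
      · rw [List.isChain_cons] at ihc ⊢
        refine ⟨fun y hy => ?_, ihc.2⟩
        have := ihc.1 y hy
        rwa [lst_cons (by simp : (b :: r) ≠ [])]
      · have hba : b < a := by
          rcases Nat.lt_trichotomy a b with h' | rfl | h'
          · omega
          · exact absurd hbl hal
          · exact h'
        exact List.IsChain.cons_cons (by simpa [lst] using hba) ihc

lemma descRuns_boundary {l : List ℕ} (h : l.Nodup) :
    (descRuns l).IsChain (fun D E => lst D < E.headI) := by
  induction l with
  | nil => simp [descRuns]
  | cons a l ih =>
    have hal : a ∉ l := (List.nodup_cons.1 h).1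
    have hnd : l.Nodup := (List.nodup_cons.1 h).2
    rcases hm : descRuns l with _ | ⟨⟨⟩ | ⟨b, r⟩, rs⟩
    · rw [descRuns_cons_of_nil hm]; simp
    · exact absurd rfl (descRuns_ne_nil (hm ▸ List.mem_cons_self))
    · have ihc := ih hnd
      rw [hm] at ihc
      have hbl : b ∈ l := by
        have : b ∈ (descRuns l).flatten := by
          rw [hm]; simp
        rwa [descRuns_flatten] at this
      rw [descRuns_cons_of_eq hm]
      split
      · rw [List.isChain_cons] at ihc ⊢
        refine ⟨fun y hy => ?_, ihc.2⟩
        have := ihc.1 y hy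
        rwa [lst_cons (by simp : (b :: r) ≠ [])]
      · have hba : a < b := by
          rcases Nat.lt_trichotomy b a with h' | rfl | h'
          · omega
          · exact absurd hbl hal
          · exact h'
        exact List.IsChain.cons_cons (by simpa [lst] using hba) ihc

/-- Merge consecutive increasing segments into maximal increasing segments. -/
def glue : List (List ℕ) → List (List ℕ)
  | [] => []
  | s :: ss =>
    match glue ss with
    | t :: ts => if lst s < t.headI then (s ++ t) :: ts else s :: t :: ts
    | [] => [s]

lemma glue_cons_of_eq {ss : List (List ℕ)} {t : List ℕ} {ts : List (List ℕ)}
    (hg : glue ss = t :: ts) (s : List ℕ) :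
    glue (s :: ss) = if lst s < t.headI then (s ++ t) :: ts else s :: t :: ts := by
  rw [glue, hg]

lemma glue_cons_of_nil {ss : List (List ℕ)} (hg : glue ss = []) (s : List ℕ) :
    glue (s :: ss) = [s] := by
  rw [glue, hg]

lemma glue_eq_nil {ss : List (List ℕ)} (h : glue ss = []) : ss = [] := by
  cases ss with
  | nil => rfl
  | cons s ss =>
    exfalso
    rcases hg : glue ss with _ | ⟨t, ts⟩
    · rw [glue_cons_of_nil hg] at h; simp at h
    · rw [glue_cons_of_eq hg] at h; split at h <;> simp at h

lemma ascRuns_flatten_glue (ss : List (List ℕ)) (h1 : ∀ s ∈ ss, s ≠ [])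
    (h2 : ∀ s ∈ ss, s.IsChain (· < ·)) :
    ascRuns ss.flatten = glue ss := by
  induction ss with
  | nil => rfl
  | cons s ss ih =>
    have hs := h1 s (by simp)
    have hcs := h2 s (by simp)
    have iheq : ascRuns ss.flatten = glue ss :=
      ih (fun x hx => h1 x (List.mem_cons_of_mem _ hx))
         (fun x hx => h2 x (List.mem_cons_of_mem _ hx))
    rcases hg : glue ss with _ | ⟨t, ts⟩
    · have : ss = [] := glue_eq_nil hg
      subst this
      rw [glue_cons_of_nil hg]
      simpa using ascRuns_of_chain hs hcs
    · rw [hg] at iheq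
      have ht : t ≠ [] := ascRuns_ne_nil (iheq ▸ List.mem_cons_self)
      obtain ⟨b, r, rfl⟩ : ∃ b r, t = b :: r := by
        cases t with
        | nil => simp at ht
        | cons b r => exact ⟨b, r, rfl⟩
      rw [glue_cons_of_eq hg]
      simp only [List.flatten_cons]
      by_cases hlt : lst s < (b :: r).headI
      · rw [if_pos hlt, ascRuns_append_merge hs hcs iheq (by simpa using hlt)]
      · rw [if_neg hlt, ascRuns_append_split hs hcs iheq (by simpa using hlt)]

lemma headI_append {s t : List ℕ} (h : s ≠ []) : (s ++ t).headI = s.headI := by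
  cases s with
  | nil => simp at h
  | cons a u => simp

lemma glue_lst_head {ss : List (List ℕ)} (h1 : ∀ s ∈ ss, s ≠ [])
    (h2 : ∀ s ∈ ss, s.IsChain (· < ·)) {t : List ℕ} {ts : List (List ℕ)}
    (hg : glue ss = t :: ts) : lst ss.headI ≤ lst t := by
  induction ss generalizing t ts with
  | nil => simp [glue] at hg
  | cons s sr ih =>
    rcases hg' : glue sr with _ | ⟨t₂, ts₂⟩
    · rw [glue_cons_of_nil hg'] at hg
      simp at hg
      simp [hg.1]
    · have h1' : ∀ x ∈ sr, x ≠ [] := fun x hx => h1 x (List.mem_cons_of_mem _ hx)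
      have h2' : ∀ x ∈ sr, x.IsChain (· < ·) := fun x hx => h2 x (List.mem_cons_of_mem _ hx)
      have hasc : ascRuns sr.flatten = t₂ :: ts₂ := by
        rw [ascRuns_flatten_glue sr h1' h2', hg']
      have ht₂ : t₂ ≠ [] := ascRuns_ne_nil (hasc ▸ List.mem_cons_self)
      have hct₂ : t₂.IsChain (· < ·) := ascRuns_chain (hasc ▸ List.mem_cons_self)
      rw [glue_cons_of_eq hg'] at hg
      split at hg
      · rcases List.cons_eq_cons.1 hg with ⟨rfl, rfl⟩
        rw [lst_append ht₂]
        simp only [List.headI]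
        have hx : lst s < t₂.headI := by assumption
        have hy := headI_le_lst ht₂ hct₂
        omega
      · rcases List.cons_eq_cons.1 hg with ⟨rfl, _⟩
        simp

lemma glue_overlap (ss : List (List ℕ)) (h1 : ∀ s ∈ ss, s ≠ [])
    (h2 : ∀ s ∈ ss, s.IsChain (· < ·))
    (h3 : ss.IsChain (fun s t => s.headI < lst t)) :
    (glue ss).IsChain (fun R S => R.headI < lst S) := by
  induction ss with
  | nil => simp [glue]
  | cons s sr ih =>
    have h1' : ∀ x ∈ sr, x ≠ [] := fun x hx => h1 x (List.mem_cons_of_mem _ hx)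
    have h2' : ∀ x ∈ sr, x.IsChain (· < ·) := fun x hx => h2 x (List.mem_cons_of_mem _ hx)
    have ihc := ih h1' h2' (List.isChain_cons.1 h3).2
    rcases hg : glue sr with _ | ⟨t, ts⟩
    · rw [glue_cons_of_nil hg]; simp
    · rw [hg] at ihc
      -- relation between s and t
      obtain ⟨s₁, sr', rfl⟩ : ∃ s₁ sr', sr = s₁ :: sr' := by
        cases sr with
        | nil => simp [glue] at hg
        | cons x y => exact ⟨x, y, rfl⟩
      have hst : s.headI < lst t := by
        have hh : s.headI < lst s₁ := by
          have := (List.isChain_cons_cons.1 h3).1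
          simpa using this
        have := glue_lst_head h1' h2' hg
        simp only [List.headI] at this
        omega
      rw [glue_cons_of_eq hg]
      split
      · rw [List.isChain_cons] at ihc ⊢
        refine ⟨fun y hy => ?_, ihc.2⟩
        have h4 := ihc.1 y hy
        rw [headI_append (h1 s (by simp))]
        have h5 : s.headI ≤ lst s := headI_le_lst (h1 s (by simp)) (h2 s (by simp))
        have h6 : lst s < t.headI := by assumption
        omega
      · exact List.IsChain.cons_cons hst ihc

/-- forward direction: ascending runs of a pop-stacked permutation overlap. -/
theorem overlap_of_popStack {π : List ℕ} (h : π.Nodup) :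
    (ascRuns (popStack π)).IsChain (fun R S => R.headI < lst S) := by
  have h1 : ∀ s ∈ (descRuns π).map List.reverse, s ≠ [] := by
    intro s hs
    rcases List.mem_map.1 hs with ⟨D, hD, rfl⟩
    simpa using descRuns_ne_nil hD
  have h2 : ∀ s ∈ (descRuns π).map List.reverse, s.IsChain (· < ·) := by
    intro s hs
    rcases List.mem_map.1 hs with ⟨D, hD, rfl⟩
    rw [List.isChain_reverse]
    exact descRuns_chain hD
  have h3 : ((descRuns π).map List.reverse).IsChain (fun s t => s.headI < lst t) := by
    rw [List.isChain_map]
    have := descRuns_boundary h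
    refine this.imp ?_
    intro D E hDE
    rwa [headI_reverse, lst_reverse]
  rw [popStack, ascRuns_flatten_glue _ h1 h2]
  exact glue_overlap _ h1 h2 h3

/-- backward direction construction. -/
theorem popStack_flatten_reverse (Rs : List (List ℕ)) (h1 : ∀ R ∈ Rs, R ≠ [])
    (h2 : ∀ R ∈ Rs, R.IsChain (· < ·))
    (h3 : Rs.IsChain (fun R S => R.headI < lst S)) :
    popStack ((Rs.map List.reverse).flatten) = Rs.flatten := by
  rw [popStack]
  have hd : descRuns ((Rs.map List.reverse).flatten) = Rs.map List.reverse := by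
    apply descRuns_flatten_eq
    · intro s hs
      rcases List.mem_map.1 hs with ⟨R, hR, rfl⟩
      simpa using h1 R hR
    · intro s hs
      rcases List.mem_map.1 hs with ⟨R, hR, rfl⟩
      rw [List.isChain_reverse]
      exact h2 R hR
    · rw [List.isChain_map]
      refine h3.imp ?_
      intro R S hRS
      rw [headI_reverse, lst_reverse]
      omega
  rw [hd, List.map_map]
  congr 1
  simp

lemma flatten_map_reverse_perm (Rs : List (List ℕ)) :
    ((Rs.map List.reverse).flatten).Perm Rs.flatten := by
  induction Rs with
  | nil => rfl
  | cons R Rs ih =>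
    simpa using List.Perm.append (List.reverse_perm R) ih

/-- The characterization of pop-stacked permutations. -/
theorem popStacked_iff {n : ℕ} {σ : List ℕ} (hσ : IsPermOf n σ) :
    IsPopStacked n σ ↔ (ascRuns σ).IsChain (fun R S => R.headI < lst S) := by
  constructor
  · rintro ⟨π, hπ, rfl⟩
    exact overlap_of_popStack (hπ.nodup_iff.2 (List.nodup_range' (s := 1) (n := n)))
  · intro h
    refine ⟨((ascRuns σ).map List.reverse).flatten, ?_, ?_⟩
    · exact ((flatten_map_reverse_perm _).trans (by rw [ascRuns_flatten])).trans hσ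
    · rw [popStack_flatten_reverse _ (fun R hR => ascRuns_ne_nil hR)
        (fun R hR => ascRuns_chain hR) h, ascRuns_flatten]

def Good (k : ℕ) {n : ℕ} (w : Fin n → Fin k) : Prop :=
  Function.Surjective w ∧ ∀ j : ℕ, j + 1 < k →
    ((∃ p q : Fin n, p < q ∧ (w p : ℕ) = j ∧ (w q : ℕ) = j + 1) ∧
     (∃ p q : Fin n, p < q ∧ (w p : ℕ) = j + 1 ∧ (w q : ℕ) = j))

def blk {n k : ℕ} (w : Fin n → Fin k) (j : Fin k) : List ℕ :=
  ((List.finRange n).filter (fun i => w i = j)).map (fun i => i.val + 1)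

def toPerm {n k : ℕ} (w : Fin n → Fin k) : List ℕ :=
  ((List.finRange k).map (blk w)).flatten

lemma mem_blk {n k : ℕ} {w : Fin n → Fin k} {j : Fin k} {v : ℕ} :
    v ∈ blk w j ↔ ∃ i : Fin n, w i = j ∧ v = (i : ℕ) + 1 := by
  constructor
  · intro hv
    rw [blk] at hv
    obtain ⟨i, hi, hie⟩ := List.mem_map.1 hv
    obtain ⟨-, hwi⟩ := List.mem_filter.1 hi
    exact ⟨i, of_decide_eq_true hwi, hie.symm⟩
  · rintro ⟨i, hwi, rfl⟩
    rw [blk]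
    exact List.mem_map.2 ⟨i, List.mem_filter.2 ⟨List.mem_finRange i, decide_eq_true hwi⟩, rfl⟩

lemma blk_pairwise {n k : ℕ} (w : Fin n → Fin k) (j : Fin k) :
    (blk w j).Pairwise (· < ·) := by
  rw [blk]
  refine List.Pairwise.map _ (fun a b h => ?_) ((List.pairwise_lt_finRange n).filter _)
  exact Nat.succ_lt_succ h

lemma blk_chain {n k : ℕ} (w : Fin n → Fin k) (j : Fin k) :
    (blk w j).IsChain (· < ·) :=
  List.isChain_iff_pairwise.2 (blk_pairwise w j)

lemma chain'_finRange {k : ℕ} {P : Fin k → Fin k → Prop}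
    (h : ∀ (j : ℕ) (h1 : j < k) (h2 : j + 1 < k), P ⟨j, h1⟩ ⟨j + 1, h2⟩) :
    (List.finRange k).IsChain P := by
  rw [List.isChain_iff_getElem]
  intro i hi
  simp only [List.length_finRange] at hi
  simp only [List.getElem_finRange, Fin.cast_mk]
  exact h i (by omega) (by omega)

lemma ascRuns_toPerm {n k : ℕ} {w : Fin n → Fin k} (hw : Good k w) :
    ascRuns (toPerm w) = (List.finRange k).map (blk w) := by
  apply ascRuns_flatten_eq
  · intro s hs
    rcases List.mem_map.1 hs with ⟨j, _, rfl⟩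
    rcases hw.1 j with ⟨i, rfl⟩
    exact List.ne_nil_of_mem (mem_blk.2 ⟨i, rfl, rfl⟩)
  · intro s hs
    rcases List.mem_map.1 hs with ⟨j, _, rfl⟩
    exact blk_chain w j
  · rw [List.isChain_map]
    apply chain'_finRange
    intro j h1 h2
    have pat := (hw.2 j h2).2
    rcases pat with ⟨p, q, hpq, hp, hq⟩
    have hpmem : (p : ℕ) + 1 ∈ blk w ⟨j + 1, h2⟩ := mem_blk.2 ⟨p, Fin.ext hp, rfl⟩
    have hqmem : (q : ℕ) + 1 ∈ blk w ⟨j, h1⟩ := mem_blk.2 ⟨q, Fin.ext hq, rfl⟩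
    have e1 : (blk w ⟨j + 1, h2⟩).headI ≤ (p : ℕ) + 1 :=
      headI_le_of_mem (blk_chain w _) hpmem
    have e2 : (q : ℕ) + 1 ≤ lst (blk w ⟨j, h1⟩) :=
      le_lst_of_mem (blk_chain w _) hqmem
    have : (p : ℕ) < (q : ℕ) := hpq
    omega

lemma overlap_toPerm {n k : ℕ} {w : Fin n → Fin k} (hw : Good k w) :
    (ascRuns (toPerm w)).IsChain (fun R S => R.headI < lst S) := by
  rw [ascRuns_toPerm hw, List.isChain_map]
  apply chain'_finRange
  intro j h1 h2
  rcases (hw.2 j h2).1 with ⟨p, q, hpq, hp, hq⟩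
  have hpmem : (p : ℕ) + 1 ∈ blk w ⟨j, h1⟩ := mem_blk.2 ⟨p, Fin.ext hp, rfl⟩
  have hqmem : (q : ℕ) + 1 ∈ blk w ⟨j + 1, h2⟩ := mem_blk.2 ⟨q, Fin.ext hq, rfl⟩
  have e1 : (blk w ⟨j, h1⟩).headI ≤ (p : ℕ) + 1 :=
    headI_le_of_mem (blk_chain w _) hpmem
  have e2 : (q : ℕ) + 1 ≤ lst (blk w ⟨j + 1, h2⟩) :=
    le_lst_of_mem (blk_chain w _) hqmem
  have : (p : ℕ) < (q : ℕ) := hpq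
  omega

lemma mem_toPerm {n k : ℕ} {w : Fin n → Fin k} {v : ℕ} :
    v ∈ toPerm w ↔ v ∈ List.range' 1 n := by
  simp only [toPerm, List.mem_flatten, List.mem_map, List.mem_range']
  constructor
  · rintro ⟨s, ⟨j, _, rfl⟩, hv⟩
    rcases mem_blk.1 hv with ⟨i, _, rfl⟩
    exact ⟨i, i.isLt, by omega⟩
  · rintro ⟨i, hi, rfl⟩
    refine ⟨blk w (w ⟨i, hi⟩), ⟨w ⟨i, hi⟩, List.mem_finRange _, rfl⟩, ?_⟩
    refine mem_blk.2 ⟨⟨i, hi⟩, rfl, ?_⟩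
    simp
    omega

lemma nodup_toPerm {n k : ℕ} (w : Fin n → Fin k) : (toPerm w).Nodup := by
  rw [toPerm, List.nodup_flatten]
  constructor
  · intro s hs
    rcases List.mem_map.1 hs with ⟨j, _, rfl⟩
    exact (blk_pairwise w j).imp (fun h => Nat.ne_of_lt h)
  · refine List.Pairwise.map _ (fun a b hab => ?_) (List.nodup_finRange k)
    intro v hv1 hv2
    rcases mem_blk.1 hv1 with ⟨i1, rfl, rfl⟩
    rcases mem_blk.1 hv2 with ⟨i2, hw2, he⟩
    have hii : i1 = i2 := Fin.ext (by omega)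
    exact hab (by rw [hii]; exact hw2)

lemma isPermOf_toPerm {n k : ℕ} (w : Fin n → Fin k) : IsPermOf n (toPerm w) := by
  rw [IsPermOf, List.perm_ext_iff_of_nodup (nodup_toPerm w) (List.nodup_range' (s := 1) (n := n))]
  exact fun v => mem_toPerm

theorem toPerm_spec {n k : ℕ} {w : Fin n → Fin k} (hw : Good k w) :
    IsPermOf n (toPerm w) ∧ IsPopStacked n (toPerm w) ∧ (ascRuns (toPerm w)).length = k := by
  refine ⟨isPermOf_toPerm w, ?_, ?_⟩
  · exact (popStacked_iff (isPermOf_toPerm w)).2 (overlap_toPerm hw)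
  · rw [ascRuns_toPerm hw]; simp

theorem toPerm_inj {n k : ℕ} {w w' : Fin n → Fin k} (hw : Good k w) (hw' : Good k w')
    (h : toPerm w = toPerm w') : w = w' := by
  have h2 : (List.finRange k).map (blk w) = (List.finRange k).map (blk w') := by
    rw [← ascRuns_toPerm hw, ← ascRuns_toPerm hw', h]
  have h3 : ∀ j : Fin k, blk w j = blk w' j := by
    intro j
    have := List.map_inj_left.1 h2 j (List.mem_finRange _)
    exact this
  funext i
  have : (i : ℕ) + 1 ∈ blk w (w i) := mem_blk.2 ⟨i, rfl, rfl⟩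
  rw [h3] at this
  rcases mem_blk.1 this with ⟨i', hwi', he⟩
  have : i' = i := Fin.ext (by omega)
  exact (this ▸ hwi').symm

lemma mem_range'_iff {v n : ℕ} : v ∈ List.range' 1 n ↔ 1 ≤ v ∧ v ≤ n := by
  rw [List.mem_range']
  constructor
  · rintro ⟨i, hi, rfl⟩; omega
  · intro ⟨h1, h2⟩; exact ⟨v - 1, by omega, by omega⟩

theorem toPerm_surj {n k : ℕ} (σ : List ℕ) (hperm : IsPermOf n σ)
    (hpop : IsPopStacked n σ) (hlen : (ascRuns σ).length = k) :
    ∃ w : Fin n → Fin k, Good k w ∧ toPerm w = σ := by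
  classical
  have hnd : σ.Nodup := hperm.nodup_iff.2 (List.nodup_range' (s := 1) (n := n))
  have hmemσ : ∀ v, v ∈ σ ↔ (1 ≤ v ∧ v ≤ n) := by
    intro v
    rw [← mem_range'_iff]
    exact hperm.mem_iff
  set Rs := ascRuns σ with hRs
  have hflat : Rs.flatten = σ := ascRuns_flatten σ
  obtain ⟨hndR, hdisj⟩ := List.nodup_flatten.1 (hflat ▸ hnd)
  -- the run of Fin k index j
  let G : Fin k → List ℕ := fun j => Rs.get ⟨j.val, by omega⟩
  have hGmem : ∀ j, G j ∈ Rs := fun j => List.get_mem _ _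
  have hGne : ∀ j, G j ≠ [] := fun j => ascRuns_ne_nil (hGmem j)
  have hGchain : ∀ j, (G j).IsChain (· < ·) := fun j => ascRuns_chain (hGmem j)
  have hGsub : ∀ j v, v ∈ G j → v ∈ σ := by
    intro j v hv
    rw [← hflat]
    exact List.mem_flatten.2 ⟨G j, hGmem j, hv⟩
  have hdisj' : ∀ j j' : Fin k, j ≠ j' → ∀ v, v ∈ G j → v ∈ G j' → False := by
    intro j j' hne v hv hv'
    rcases Nat.lt_or_ge j.val j'.val with h | h
    · exact (List.pairwise_iff_get.1 hdisj ⟨j.val, by omega⟩ ⟨j'.val, by omega⟩ h) hv hv'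
    · have hlt : j'.val < j.val := by
        rcases Nat.lt_or_ge j'.val j.val with h' | h'
        · exact h'
        · exact absurd (Fin.ext (by omega)) hne
      exact (List.pairwise_iff_get.1 hdisj ⟨j'.val, by omega⟩ ⟨j.val, by omega⟩ hlt) hv' hv
  have huniq : ∀ v ∈ σ, ∃! j : Fin k, v ∈ G j := by
    intro v hv
    rw [← hflat] at hv
    rcases List.mem_flatten.1 hv with ⟨R, hR, hvR⟩
    rcases List.mem_iff_get.1 hR with ⟨idx, rfl⟩
    refine ⟨⟨idx.val, by omega⟩, hvR, ?_⟩
    intro j hj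
    by_contra hne
    exact hdisj' j ⟨idx.val, by omega⟩ (by exact hne) v hj hvR
  let w : Fin n → Fin k := fun i =>
    Fintype.choose _ (huniq (i.val + 1) ((hmemσ _).2 (by omega)))
  have hw1 : ∀ i : Fin n, i.val + 1 ∈ G (w i) := fun i =>
    Fintype.choose_spec _ (huniq (i.val + 1) ((hmemσ _).2 (by omega)))
  have hw2 : ∀ (i : Fin n) (j : Fin k), i.val + 1 ∈ G j → w i = j := by
    intro i j hj
    have h := huniq (i.val + 1) ((hmemσ _).2 (by omega))
    exact (h.unique (hw1 i) hj) 
  -- values in runs give word positions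
  have hval : ∀ (j : Fin k) (v : ℕ), v ∈ G j → ∃ i : Fin n, i.val + 1 = v ∧ w i = j := by
    intro j v hv
    have hvσ := (hmemσ v).1 (hGsub j v hv)
    refine ⟨⟨v - 1, by omega⟩, by simp; omega, ?_⟩
    apply hw2
    have : (v - 1) + 1 = v := by omega
    simpa [this] using hv
  have hblk : ∀ j, blk w j = G j := by
    intro j
    have hmemiff : ∀ v, v ∈ blk w j ↔ v ∈ G j := by
      intro v
      rw [mem_blk]
      constructor
      · rintro ⟨i, rfl, rfl⟩
        exact hw1 i
      · intro hv
        rcases hval j v hv with ⟨i, hie, hwi⟩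
        exact ⟨i, hwi, hie.symm⟩
    have h1 : (blk w j).Nodup := (blk_pairwise w j).imp (fun h => Nat.ne_of_lt h)
    have h2 : (G j).Nodup := hndR _ (hGmem j)
    exact List.Perm.eq_of_pairwise' (r := (· ≤ ·))
      ((blk_pairwise w j).imp (fun h => Nat.le_of_lt h))
      ((List.isChain_iff_pairwise.1 (hGchain j)).imp (fun h => Nat.le_of_lt h))
      ((List.perm_ext_iff_of_nodup h1 h2).2 hmemiff)
  -- boundary and overlap facts
  have hbd := ascRuns_boundary hnd
  have hov := (popStacked_iff hperm).1 hpop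
  rw [← hRs] at hbd hov
  have hbd' := List.isChain_iff_getElem.1 hbd
  have hov' := List.isChain_iff_getElem.1 hov
  have hGood : Good k w := by
    constructor
    · intro j
      have := hGne j
      obtain ⟨v, hv⟩ : ∃ v, v ∈ G j := by
        cases h : G j with
        | nil => exact absurd h this
        | cons a t => exact ⟨a, h ▸ (List.mem_cons_self (a := a) (l := t))⟩
      rcases hval j v hv with ⟨i, _, hwi⟩
      exact ⟨i, hwi⟩
    · intro j hj
      have hjlt : j < k := by omega
      constructor
      · -- overlap : headI (G j) < lst (G (j+1))
        have h := hov' j (by omega)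
        have hx : (G ⟨j, hjlt⟩).headI ∈ G ⟨j, hjlt⟩ := headI_mem (hGne _)
        have hy : lst (G ⟨j + 1, hj⟩) ∈ G ⟨j + 1, hj⟩ := lst_mem (hGne _)
        rcases hval _ _ hx with ⟨p, hpe, hpw⟩
        rcases hval _ _ hy with ⟨q, hqe, hqw⟩
        refine ⟨p, q, ?_, by rw [hpw], by rw [hqw]⟩
        have : (G ⟨j, hjlt⟩).headI < lst (G ⟨j + 1, hj⟩) := h
        rw [Fin.lt_def]
        omega
      · -- boundary : headI (G (j+1)) < lst (G j)
        have h := hbd' j (by omega)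
        have hx : (G ⟨j + 1, hj⟩).headI ∈ G ⟨j + 1, hj⟩ := headI_mem (hGne _)
        have hy : lst (G ⟨j, hjlt⟩) ∈ G ⟨j, hjlt⟩ := lst_mem (hGne _)
        rcases hval _ _ hx with ⟨p, hpe, hpw⟩
        rcases hval _ _ hy with ⟨q, hqe, hqw⟩
        refine ⟨p, q, ?_, by rw [hpw], by rw [hqw]⟩
        have : (G ⟨j + 1, hj⟩).headI < lst (G ⟨j, hjlt⟩) := h
        rw [Fin.lt_def]
        omega
  refine ⟨w, hGood, ?_⟩
  rw [toPerm]
  have hmapeq : (List.finRange k).map (blk w) = Rs := by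
    apply List.ext_get
    · simp [hlen]
    · intro m h1 h2
      simp only [List.get_eq_getElem, List.getElem_map, List.getElem_finRange]
      rw [hblk]
      rfl
  rw [hmapeq, hflat]

open scoped Classical

abbrev St (k : ℕ) := Finset (Fin k) × Finset (Fin k × Fin k)

noncomputable def st {n k : ℕ} (w : Fin n → Fin k) : St k :=
  (Finset.univ.image w,
   Finset.univ.filter (fun ab : Fin k × Fin k => ∃ p q : Fin n, p < q ∧ w p = ab.1 ∧ w q = ab.2))

noncomputable def step {k : ℕ} (c : Fin k) (s : St k) : St k :=
  (insert c s.1, s.2 ∪ s.1.image (fun b => (c, b)))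

def Accept (k : ℕ) (s : St k) : Prop :=
  s.1 = Finset.univ ∧ ∀ ab : Fin k × Fin k, ab.1.val + 1 = ab.2.val →
    (ab ∈ s.2 ∧ (ab.2, ab.1) ∈ s.2)

lemma st_cons {n k : ℕ} (c : Fin k) (w : Fin n → Fin k) :
    st (Fin.cons c w) = step c (st w) := by
  unfold st step
  refine Prod.ext ?_ ?_
  · simp only []
    ext x
    simp only [Finset.mem_image, Finset.mem_insert, Finset.mem_univ, true_and]
    constructor
    · rintro ⟨i, rfl⟩
      rcases Fin.eq_zero_or_eq_succ i with rfl | ⟨i', rfl⟩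
      · left; simp
      · right; exact ⟨i', by simp⟩
    · rintro (rfl | ⟨i, rfl⟩)
      · exact ⟨0, by simp⟩
      · exact ⟨i.succ, by simp⟩
  · simp only []
    ext ⟨a, b⟩
    simp only [Finset.mem_filter, Finset.mem_univ, true_and, Finset.mem_union,
      Finset.mem_image]
    constructor
    · rintro ⟨p, q, hpq, hp, hq⟩
      rcases Fin.eq_zero_or_eq_succ q with rfl | ⟨q', rfl⟩
      · exact absurd hpq (by simp [Fin.lt_def])
      rcases Fin.eq_zero_or_eq_succ p with rfl | ⟨p', rfl⟩
      · right
        refine ⟨b, ⟨q', by simpa using hq⟩, ?_⟩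
        simp only [Fin.cons_zero] at hp
        rw [hp]
      · left
        refine ⟨p', q', ?_, by simpa using hp, by simpa using hq⟩
        simpa [Fin.succ_lt_succ_iff] using hpq
    · rintro (⟨p, q, hpq, hp, hq⟩ | ⟨b', ⟨q, rfl⟩, he⟩)
      · exact ⟨p.succ, q.succ, by simpa [Fin.succ_lt_succ_iff] using hpq,
          by simpa using hp, by simpa using hq⟩
      · rcases Prod.mk.injEq .. ▸ he with ⟨rfl, rfl⟩
        exact ⟨0, q.succ, by simp [Fin.lt_def], by simp, by simp⟩

lemma mem_stP {n k : ℕ} {w : Fin n → Fin k} {ab : Fin k × Fin k} :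
    ab ∈ (st w).2 ↔ ∃ p q : Fin n, p < q ∧ w p = ab.1 ∧ w q = ab.2 := by
  rw [st]
  exact ⟨fun h => (Finset.mem_filter.1 h).2,
    fun h => Finset.mem_filter.2 ⟨Finset.mem_univ _, h⟩⟩

lemma mem_stS {n k : ℕ} {w : Fin n → Fin k} {j : Fin k} :
    j ∈ (st w).1 ↔ ∃ i, w i = j := by
  rw [st]
  simp only [Finset.mem_image, Finset.mem_univ, true_and]

lemma good_iff_accept {n k : ℕ} (w : Fin n → Fin k) :
    Good k w ↔ Accept k (st w) := by
  constructor
  · rintro ⟨hs, hpat⟩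
    constructor
    · ext j
      simp only [Finset.mem_univ, iff_true]
      rcases hs j with ⟨i, hi⟩
      exact mem_stS.2 ⟨i, hi⟩
    · rintro ⟨a, b⟩ hab
      have hab' : a.val + 1 = b.val := hab
      have hbk : (a : ℕ) + 1 < k := by have := b.isLt; omega
      obtain ⟨⟨p, q, h1, h2, h3⟩, ⟨p', q', h1', h2', h3'⟩⟩ := hpat a.val hbk
      constructor
      · exact mem_stP.2 ⟨p, q, h1, Fin.ext (show (w p).val = a.val from h2),
          Fin.ext (show (w q).val = b.val by omega)⟩
      · exact mem_stP.2 ⟨p', q', h1', Fin.ext (show (w p').val = b.val by omega),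
          Fin.ext (show (w q').val = a.val from h3')⟩
  · rintro ⟨hs, hpat⟩
    constructor
    · intro j
      have : j ∈ (st w).1 := by rw [hs]; exact Finset.mem_univ j
      rcases mem_stS.1 this with ⟨i, hi⟩
      exact ⟨i, hi⟩
    · intro j hj
      have hjk : j < k := by omega
      obtain ⟨h1, h2⟩ := hpat (⟨j, hjk⟩, ⟨j + 1, hj⟩) (by simp)
      rcases mem_stP.1 h1 with ⟨p, q, hpq, hp, hq⟩
      rcases mem_stP.1 h2 with ⟨p', q', hpq', hp', hq'⟩
      exact ⟨⟨p, q, hpq, by rw [hp], by rw [hq]⟩,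
        ⟨p', q', hpq', by rw [hp'], by rw [hq']⟩⟩

noncomputable def cnt (k : ℕ) (s : St k) (n : ℕ) : ℕ :=
  (Finset.univ.filter (fun w : Fin n → Fin k => st w = s)).card

lemma popCountK_eq_card (n k : ℕ) :
    popCountK n k = Nat.card {w : Fin n → Fin k // Good k w} := by
  symm
  apply Nat.card_eq_of_bijective (fun w => ⟨toPerm w.1, toPerm_spec w.2⟩)
  constructor
  · rintro ⟨w, hw⟩ ⟨w', hw'⟩ h
    have := toPerm_inj hw hw' (congrArg Subtype.val h)
    exact Subtype.ext this
  · rintro ⟨σ, hperm, hpop, hlen⟩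
    rcases toPerm_surj σ hperm hpop hlen with ⟨w, hG, he⟩
    exact ⟨⟨w, hG⟩, Subtype.ext he⟩

lemma popCountK_eq_sum_cnt (n k : ℕ) :
    popCountK n k = ∑ s ∈ Finset.univ.filter (Accept k), cnt k s n := by
  rw [popCountK_eq_card, Nat.card_eq_fintype_card, Fintype.card_subtype]
  rw [Finset.card_eq_sum_card_fiberwise (f := st) (t := Finset.univ.filter (Accept k))
    (fun w hw => Finset.mem_filter.2 ⟨Finset.mem_univ _,
      (good_iff_accept w).1 (Finset.mem_filter.1 hw).2⟩)]
  apply Finset.sum_congr rfl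
  intro s hs
  have hacc : Accept k s := (Finset.mem_filter.1 hs).2
  rw [cnt, Finset.filter_filter]
  apply Finset.card_bij (fun w _ => w)
  · intro w hw
    rcases Finset.mem_filter.1 hw with ⟨_, _, h2⟩
    exact Finset.mem_filter.2 ⟨Finset.mem_univ _, h2⟩
  · intro a ha b hb h
    exact h
  · intro w hw
    rcases Finset.mem_filter.1 hw with ⟨_, h2⟩
    refine ⟨w, Finset.mem_filter.2 ⟨Finset.mem_univ _, ?_, h2⟩, rfl⟩
    exact (good_iff_accept w).2 (h2 ▸ hacc)

lemma cnt_succ (k : ℕ) (s : St k) (n : ℕ) :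
    cnt k s (n + 1) = ∑ s' : St k,
      (∑ c : Fin k, if step c s' = s then 1 else 0) * cnt k s' n := by
  rw [cnt, Finset.card_filter]
  rw [← Equiv.sum_comp (Fin.consEquiv (fun _ : Fin (n+1) => Fin k))
    (fun w => if st w = s then 1 else 0)]
  rw [Fintype.sum_prod_type]
  have hstep : ∀ (c : Fin k) (v : Fin n → Fin k),
      st ((Fin.consEquiv (fun _ : Fin (n+1) => Fin k)) (c, v)) = step c (st v) := by
    intro c v
    exact st_cons c v
  calc ∑ c : Fin k, ∑ v : Fin n → Fin k,
        (if st ((Fin.consEquiv fun _ => Fin k) (c, v)) = s then 1 else 0)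
      = ∑ c : Fin k, ∑ v : Fin n → Fin k, (if step c (st v) = s then 1 else 0) := by
        apply Finset.sum_congr rfl; intro c _
        apply Finset.sum_congr rfl; intro v _
        rw [hstep]
    _ = ∑ c : Fin k, ∑ v : Fin n → Fin k, ∑ s' : St k,
          (if st v = s' then (if step c s' = s then 1 else 0) else 0) := by
        apply Finset.sum_congr rfl; intro c _
        apply Finset.sum_congr rfl; intro v _
        rw [Finset.sum_ite_eq Finset.univ (st v)
          (fun s' => if step c s' = s then 1 else 0)]
        simp
    _ = ∑ c : Fin k, ∑ s' : St k, ∑ v : Fin n → Fin k,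
          (if st v = s' then (if step c s' = s then 1 else 0) else 0) := by
        apply Finset.sum_congr rfl; intro c _
        exact Finset.sum_comm
    _ = ∑ c : Fin k, ∑ s' : St k, (if step c s' = s then 1 else 0) * cnt k s' n := by
        apply Finset.sum_congr rfl; intro c _
        apply Finset.sum_congr rfl; intro s' _
        rw [cnt, Finset.card_filter, Finset.mul_sum]
        apply Finset.sum_congr rfl; intro v _
        by_cases h : st v = s' <;> simp [h]
    _ = ∑ s' : St k, (∑ c : Fin k, if step c s' = s then 1 else 0) * cnt k s' n := by
        rw [Finset.sum_comm]
        apply Finset.sum_congr rfl; intro s' _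
        rw [Finset.sum_mul]

noncomputable def Mmat (k : ℕ) : Matrix (St k) (St k) ℚ :=
  fun s s' => ((∑ c : Fin k, if step c s' = s then 1 else 0 : ℕ) : ℚ)

noncomputable def vvec (k n : ℕ) : St k → ℚ := fun s => (cnt k s n : ℚ)

lemma vvec_succ (k n : ℕ) : vvec k (n + 1) = (Mmat k).mulVec (vvec k n) := by
  funext s
  rw [Matrix.mulVec, dotProduct]
  rw [vvec]
  push_cast [cnt_succ k s n]
  apply Finset.sum_congr rfl
  intro s' _
  rw [Mmat, vvec]
  push_cast
  ring

lemma vvec_eq (k n : ℕ) : vvec k n = ((Mmat k) ^ n).mulVec (vvec k 0) := by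
  induction n with
  | zero => rw [pow_zero, Matrix.one_mulVec]
  | succ n ih =>
    rw [vvec_succ, ih, Matrix.mulVec_mulVec, ← pow_succ']

lemma entry_sum_zero (k m : ℕ) (s j : St k) :
    ∑ i ∈ Finset.range (Fintype.card (St k) + 1),
      (Mmat k).charpoly.coeff i * ((Mmat k) ^ (m + i)) s j = 0 := by
  set M := Mmat k
  set χ := M.charpoly
  have hdeg : χ.natDegree = Fintype.card (St k) := Matrix.charpoly_natDegree_eq_dim M
  have haeval : Polynomial.aeval M χ = 0 := Matrix.aeval_self_charpoly M
  have hexp : ∀ t : St k, ∑ i ∈ Finset.range (Fintype.card (St k) + 1),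
      χ.coeff i * (M ^ i) t j = 0 := by
    intro t
    have : (Polynomial.aeval M χ) t j = 0 := by rw [haeval]; rfl
    rw [Polynomial.aeval_eq_sum_range, hdeg] at this
    rw [← this, Matrix.sum_apply]
    apply Finset.sum_congr rfl
    intro i _
    rw [Matrix.smul_apply, smul_eq_mul]
  calc ∑ i ∈ Finset.range (Fintype.card (St k) + 1), χ.coeff i * (M ^ (m + i)) s j
      = ∑ i ∈ Finset.range (Fintype.card (St k) + 1),
          ∑ t : St k, χ.coeff i * ((M ^ m) s t * (M ^ i) t j) := by
        apply Finset.sum_congr rfl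
        intro i _
        rw [pow_add, Matrix.mul_apply, Finset.mul_sum]
    _ = ∑ t : St k, (M ^ m) s t *
          (∑ i ∈ Finset.range (Fintype.card (St k) + 1), χ.coeff i * (M ^ i) t j) := by
        rw [Finset.sum_comm]
        apply Finset.sum_congr rfl
        intro t _
        rw [Finset.mul_sum]
        apply Finset.sum_congr rfl
        intro i _
        ring
    _ = 0 := by
        apply Finset.sum_eq_zero
        intro t _
        rw [hexp t, mul_zero]

lemma popCountK_rec (k m : ℕ) :
    ∑ i ∈ Finset.range (Fintype.card (St k) + 1),
      (Mmat k).charpoly.coeff i * (popCountK (m + i) k : ℚ) = 0 := by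
  set M := Mmat k
  set χ := M.charpoly
  set acc := Finset.univ.filter (Accept k)
  have hpc : ∀ n : ℕ, (popCountK n k : ℚ) = ∑ s ∈ acc, ((M ^ n).mulVec (vvec k 0)) s := by
    intro n
    rw [popCountK_eq_sum_cnt n k]
    push_cast
    apply Finset.sum_congr rfl
    intro s _
    have := congrFun (vvec_eq k n) s
    rw [vvec] at this
    rw [← this]
  calc ∑ i ∈ Finset.range (Fintype.card (St k) + 1), χ.coeff i * (popCountK (m + i) k : ℚ)
      = ∑ i ∈ Finset.range (Fintype.card (St k) + 1), ∑ s ∈ acc,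
          ∑ j : St k, χ.coeff i * ((M ^ (m + i)) s j * vvec k 0 j) := by
        apply Finset.sum_congr rfl
        intro i _
        rw [hpc (m + i), Finset.mul_sum]
        apply Finset.sum_congr rfl
        intro s _
        rw [Matrix.mulVec, dotProduct, Finset.mul_sum]
    _ = ∑ s ∈ acc, ∑ j : St k,
          (∑ i ∈ Finset.range (Fintype.card (St k) + 1), χ.coeff i * (M ^ (m + i)) s j)
            * vvec k 0 j := by
        rw [Finset.sum_comm]
        apply Finset.sum_congr rfl
        intro s _
        rw [Finset.sum_comm]
        apply Finset.sum_congr rfl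
        intro j _
        rw [Finset.sum_mul]
        apply Finset.sum_congr rfl
        intro i _
        ring
    _ = 0 := by
        apply Finset.sum_eq_zero
        intro s _
        apply Finset.sum_eq_zero
        intro j _
        rw [entry_sum_zero k m s j, zero_mul]

theorem rational_of_linear_rec (A : ℕ → ℚ) (N : ℕ) (c : ℕ → ℚ) (hcN : c N = 1)
    (hrec : ∀ m, ∑ i ∈ Finset.range (N + 1), c i * A (m + i) = 0) :
    ∃ p q : Polynomial ℚ, q ≠ 0 ∧
      (q : PowerSeries ℚ) * PowerSeries.mk A = (p : PowerSeries ℚ) := by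
  set q : Polynomial ℚ := ∑ i ∈ Finset.range (N + 1), Polynomial.C (c i) * Polynomial.X ^ (N - i)
    with hq
  have hqcoeff : ∀ j, q.coeff j = if j ≤ N then c (N - j) else 0 := by
    intro j
    rw [hq, Polynomial.finset_sum_coeff]
    by_cases hjN : j ≤ N
    · rw [if_pos hjN]
      rw [Finset.sum_eq_single (N - j)]
      · rw [Polynomial.coeff_C_mul, Polynomial.coeff_X_pow]
        have : N - (N - j) = j := by omega
        rw [this, if_pos rfl, mul_one]
      · intro i hi hne
        rw [Polynomial.coeff_C_mul, Polynomial.coeff_X_pow]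
        rw [Finset.mem_range] at hi
        have : ¬ (j = N - i) := by omega
        rw [if_neg this, mul_zero]
      · intro h
        exact absurd (Finset.mem_range.2 (by omega)) h
    · rw [if_neg hjN]
      apply Finset.sum_eq_zero
      intro i hi
      rw [Finset.mem_range] at hi
      rw [Polynomial.coeff_C_mul, Polynomial.coeff_X_pow]
      have : ¬ (j = N - i) := by omega
      rw [if_neg this, mul_zero]
  have hq0 : q ≠ 0 := by
    intro h
    have := hqcoeff 0
    rw [h] at this
    simp only [Polynomial.coeff_zero, Nat.zero_le, if_true, Nat.sub_zero] at this
    rw [hcN] at this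
    exact one_ne_zero this.symm
  have hvanish : ∀ m, N ≤ m → (PowerSeries.coeff m) ((q : PowerSeries ℚ) * PowerSeries.mk A) = 0 := by
    intro m hm
    rw [PowerSeries.coeff_mul]
    rw [Finset.Nat.sum_antidiagonal_eq_sum_range_succ_mk]
    have h1 : ∀ ij : ℕ × ℕ, (PowerSeries.coeff ij.1) (q : PowerSeries ℚ) = q.coeff ij.1 :=
      fun ij => Polynomial.coeff_coe q ij.1
    calc ∑ i ∈ Finset.range (m + 1),
          (PowerSeries.coeff i) (q : PowerSeries ℚ) * (PowerSeries.coeff (m - i)) (PowerSeries.mk A)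
        = ∑ i ∈ Finset.range (m + 1), (if i ≤ N then c (N - i) else 0) * A (m - i) := by
          apply Finset.sum_congr rfl
          intro i _
          rw [Polynomial.coeff_coe, hqcoeff i, PowerSeries.coeff_mk]
      _ = ∑ i ∈ Finset.range (N + 1), c (N - i) * A (m - i) := by
          rw [← Finset.sum_subset (Finset.range_subset_range.2 (by omega : N + 1 ≤ m + 1))]
          · apply Finset.sum_congr rfl
            intro i hi
            rw [Finset.mem_range] at hi
            rw [if_pos (by omega)]
          · intro i _ hi
            rw [Finset.mem_range] at hi
            rw [if_neg (by omega), zero_mul]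
      _ = ∑ i ∈ Finset.range (N + 1), c i * A (m - N + i) := by
          rw [← Finset.sum_range_reflect (fun i => c i * A (m - N + i)) (N + 1)]
          apply Finset.sum_congr rfl
          intro i hi
          rw [Finset.mem_range] at hi
          have e1 : N + 1 - 1 - i = N - i := by omega
          have e2 : m - N + (N - i) = m - i := by omega
          rw [e1, e2]
      _ = 0 := hrec (m - N)
  refine ⟨PowerSeries.trunc N ((q : PowerSeries ℚ) * PowerSeries.mk A), q, hq0, ?_⟩
  apply PowerSeries.ext
  intro m
  rw [Polynomial.coeff_coe, PowerSeries.coeff_trunc]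
  by_cases hm : m < N
  · rw [if_pos hm]
  · rw [if_neg hm, hvanish m (by omega)]

/-- for each fixed `k ≥ 1`, the generating function `F_k(x)` for
pop-stacked permutations with exactly `k` ascending runs is rational. -/
theorem statement16 (k : ℕ) (hk : 1 ≤ k) :
    ∃ p q : Polynomial ℚ, q ≠ 0 ∧
      (q : PowerSeries ℚ) * PowerSeries.mk (fun n => (popCountK n k : ℚ)) =
        (p : PowerSeries ℚ) := by
  have hmono := Matrix.charpoly_monic (Mmat k)
  have hdeg := Matrix.charpoly_natDegree_eq_dim (Mmat k)
  exact rational_of_linear_rec (fun n => (popCountK n k : ℚ)) (Fintype.card (St k))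
    (fun i => (Mmat k).charpoly.coeff i)
    (by rw [← hdeg]; exact hmono.coeff_natDegree)
    (fun m => popCountK_rec k m)
end

section
/- The number of pop-stacked permutations of [n] grows superexponentially: for every constant C > 0, the count f(n) exceeds Cⁿ for all sufficiently large n. In particular, the ordinary generating function ∑ f(n)xⁿ has radius of convergence 0. -/
section Aux

lemma descRuns_merge {a c : ℕ} {l r : List ℕ} {rs : List (List ℕ)}
    (h : descRuns l = (c :: r) :: rs) (hc : c < a) :
    descRuns (a :: l) = (a :: c :: r) :: rs := by
  simp only [descRuns, h, if_pos hc]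

lemma descRuns_new {a c : ℕ} {l r : List ℕ} {rs : List (List ℕ)}
    (h : descRuns l = (c :: r) :: rs) (hc : ¬ c < a) :
    descRuns (a :: l) = [a] :: (c :: r) :: rs := by
  simp only [descRuns, h, if_neg hc]

lemma descRuns_head (z : ℕ) (l : List ℕ) : ∃ r rs, descRuns (z :: l) = (z :: r) :: rs := by
  cases h : descRuns l with
  | nil => exact ⟨[], [], by simp only [descRuns, h]⟩
  | cons B rs =>
    cases B with
    | nil => exact ⟨[], [], by simp only [descRuns, h]⟩
    | cons c r =>
      by_cases hc : c < z
      · exact ⟨c :: r, rs, descRuns_merge h hc⟩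
      · exact ⟨[], (c :: r) :: rs, descRuns_new h hc⟩

def ilv : List ℕ → List ℕ → List ℕ
  | x :: a, y :: b => x :: y :: ilv a b
  | _, _ => []

lemma descRuns_ilv : ∀ (a b t : List ℕ), a.length = b.length →
    (∀ x ∈ a, ∀ y ∈ b, x < y) → (∀ x ∈ a, ∀ z ∈ t, x < z) →
    descRuns (ilv b a ++ t) = List.zipWith (fun x y => [y, x]) a b ++ descRuns t
  | [], [], t, _, _, _ => by simp [ilv]
  | [], y :: b, t, hlen, _, _ => by simp at hlen
  | x :: a, [], t, hlen, _, _ => by simp at hlen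
  | x :: a, y :: b, t, hlen, hab, ht => by
    have ih := descRuns_ilv a b t (by simpa using hlen)
      (fun u hu v hv => hab u (List.mem_cons_of_mem _ hu) v (List.mem_cons_of_mem _ hv))
      (fun u hu z hz => ht u (List.mem_cons_of_mem _ hu) z hz)
    have hx : descRuns (x :: (ilv b a ++ t)) =
        [x] :: (List.zipWith (fun x y => [y, x]) a b ++ descRuns t) := by
      match a, b, hlen with
      | [], [], _ =>
        simp only [ilv, List.nil_append, List.zipWith_nil_left]
        cases t with
        | nil => simp [descRuns]
        | cons z t' =>
          obtain ⟨r, rs, hr⟩ := descRuns_head z t'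
          have hzx : ¬ z < x := by
            have := ht x (by simp) z (by simp)
            omega
          rw [hr]
          exact descRuns_new hr hzx
      | x' :: a', y' :: b', _ =>
        have hstep : ilv (y' :: b') (x' :: a') ++ t = y' :: (x' :: (ilv b' a' ++ t)) := by
          simp [ilv]
        rw [hstep] at ih
        have : ¬ y' < x := by
          have := hab x (by simp) y' (by simp)
          omega
        rw [show List.zipWith (fun x y => [y, x]) (x' :: a') (y' :: b') =
          [y', x'] :: List.zipWith (fun x y => [y, x]) a' b' from rfl] at ih
        simpa [ilv] using descRuns_new ih this
    have hxy : x < y := hab x (by simp) y (by simp)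
    have : descRuns (y :: (x :: (ilv b a ++ t))) =
        (y :: x :: []) :: (List.zipWith (fun x y => [y, x]) a b ++ descRuns t) :=
      descRuns_merge hx hxy
    simpa [ilv] using this

lemma flatten_zip : ∀ (a b : List ℕ),
    ((List.zipWith (fun x y => [y, x]) a b).map List.reverse).flatten = ilv a b
  | [], [] => by simp [ilv]
  | [], y :: b => by simp [ilv]
  | x :: a, [] => by simp [ilv]
  | x :: a, y :: b => by
    simp only [ilv, List.zipWith_cons_cons, List.map_cons, List.flatten_cons, flatten_zip a b]
    simp

lemma popStack_ilv (a b t : List ℕ) (hlen : a.length = b.length)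
    (hab : ∀ x ∈ a, ∀ y ∈ b, x < y) (ht : ∀ x ∈ a, ∀ z ∈ t, x < z) :
    popStack (ilv b a ++ t) = ilv a b ++ popStack t := by
  unfold popStack
  rw [descRuns_ilv a b t hlen hab ht, List.map_append, List.flatten_append, flatten_zip a b]

lemma ilv_perm : ∀ (a b : List ℕ), a.length = b.length → (ilv a b).Perm (a ++ b)
  | [], [], _ => by simp [ilv]
  | [], y :: b, h => by simp at h
  | x :: a, [], h => by simp at h
  | x :: a, y :: b, h => by
    have ih := ilv_perm a b (by simpa using h)
    show List.Perm (x :: y :: ilv a b) _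
    exact ((ih.cons y).trans List.perm_middle.symm).cons x

lemma ilv_inj : ∀ (b a a' : List ℕ), a.length = b.length → a'.length = b.length →
    ilv a b = ilv a' b → a = a'
  | [], a, a', h, h', _ => by
    rw [List.length_eq_zero_iff.1 h, List.length_eq_zero_iff.1 h']
  | y :: b, x :: a, x' :: a', h, h', heq => by
    simp only [ilv, List.cons.injEq] at heq
    obtain ⟨rfl, -, h3⟩ := heq
    rw [ilv_inj b a a' (by simpa using h) (by simpa using h') h3]
  | y :: b, [], a', h, h', heq => by simp at h
  | y :: b, x :: a, [], h, h', heq => by simp at h'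

def aL (m : ℕ) (g : Equiv.Perm (Fin m)) : List ℕ :=
  (List.finRange m).map fun i => (g i : ℕ) + 1

lemma aL_length (m : ℕ) (g : Equiv.Perm (Fin m)) : (aL m g).length = m := by
  simp [aL]

lemma aL_mem {m : ℕ} {g : Equiv.Perm (Fin m)} {x : ℕ} (hx : x ∈ aL m g) :
    1 ≤ x ∧ x ≤ m := by
  simp only [aL, List.mem_map] at hx
  obtain ⟨i, -, rfl⟩ := hx
  have := (g i).isLt
  omega

lemma aL_perm (m : ℕ) (g : Equiv.Perm (Fin m)) : (aL m g).Perm (List.range' 1 m) := by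
  rw [List.perm_ext_iff_of_nodup _ (List.nodup_range' (s := 1) (n := m))]
  · intro x
    simp only [aL, List.mem_map, List.mem_finRange, true_and, List.mem_range'_1]
    constructor
    · rintro ⟨i, rfl⟩; have := (g i).isLt; omega
    · rintro ⟨h1, h2⟩
      refine ⟨g.symm ⟨x - 1, by omega⟩, ?_⟩
      rw [Equiv.apply_symm_apply]
      simp; omega
  · refine List.Nodup.map ?_ (List.nodup_finRange m)
    intro i j hij
    have : ((g i : ℕ)) = g j := by simpa using hij
    exact g.injective (Fin.val_injective this)

lemma range'_double (m : ℕ) :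
    List.range' 1 m ++ List.range' (m + 1) m = List.range' 1 (2 * m) := by
  have := List.range'_append (s := 1) (m := m) (n := m) (step := 1)
  simp only [one_mul] at this
  rw [show m + 1 = 1 + m from by omega, this]
  congr 1
  omega

lemma construction (m n : ℕ) (t : List ℕ)
    (hconcat : List.range' 1 (2 * m) ++ t = List.range' 1 n)
    (ht : ∀ z ∈ t, 2 * m < z) (hpop : popStack t = t) :
    m.factorial ≤ popCount n := by
  classical
  haveI : Finite {σ : List ℕ // IsPermOf n σ ∧ IsPopStacked n σ} := by
    apply Finite.of_injective
      (fun σ => (⟨σ.1, by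
        rw [List.mem_toFinset]
        exact List.mem_permutations.2 σ.2.1⟩ :
        ((List.range' 1 n).permutations.toFinset : Finset (List ℕ))))
    intro u v huv
    simp only [Subtype.mk.injEq] at huv
    exact Subtype.ext huv
  set bL : List ℕ := List.range' (m + 1) m with hbL
  have hblen : bL.length = m := by simp [hbL]
  have hab : ∀ (g : Equiv.Perm (Fin m)), ∀ x ∈ aL m g, ∀ y ∈ bL, x < y := by
    intro g x hx y hy
    have h1 := aL_mem hx
    rw [hbL, List.mem_range'_1] at hy
    omega
  have htc : ∀ (g : Equiv.Perm (Fin m)), ∀ x ∈ aL m g, ∀ z ∈ t, x < z := by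
    intro g x hx z hz
    have h1 := aL_mem hx
    have := ht z hz
    omega
  have hlen : ∀ (g : Equiv.Perm (Fin m)), (aL m g).length = bL.length := by
    intro g; rw [aL_length, hblen]
  have habperm : ∀ (g : Equiv.Perm (Fin m)),
      ((aL m g ++ bL) ++ t).Perm (List.range' 1 n) := by
    intro g
    rw [← hconcat, ← range'_double m]
    exact ((aL_perm m g).append (List.Perm.refl bL)).append (List.Perm.refl t)
  have hσperm : ∀ (g : Equiv.Perm (Fin m)), IsPermOf n (ilv (aL m g) bL ++ t) := by
    intro g
    exact ((ilv_perm _ _ (hlen g)).append (List.Perm.refl t)).trans (habperm g)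
  have hπperm : ∀ (g : Equiv.Perm (Fin m)), IsPermOf n (ilv bL (aL m g) ++ t) := by
    intro g
    refine ((ilv_perm _ _ (hlen g).symm).append (List.Perm.refl t)).trans ?_
    exact (List.perm_append_comm.append (List.Perm.refl t)).trans (habperm g)
  have hps : ∀ (g : Equiv.Perm (Fin m)),
      popStack (ilv bL (aL m g) ++ t) = ilv (aL m g) bL ++ t := by
    intro g
    rw [popStack_ilv _ _ _ (hlen g) (hab g) (htc g), hpop]
  set F : Equiv.Perm (Fin m) → {σ : List ℕ // IsPermOf n σ ∧ IsPopStacked n σ} :=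
    fun g => ⟨ilv (aL m g) bL ++ t, hσperm g, ilv bL (aL m g) ++ t, hπperm g, hps g⟩
    with hF
  have hFinj : Function.Injective F := by
    intro g g' hgg'
    have h1 : ilv (aL m g) bL ++ t = ilv (aL m g') bL ++ t := congrArg Subtype.val hgg'
    have h2 := List.append_cancel_right h1
    have h3 := ilv_inj bL _ _ (hlen g) (hlen g') h2
    have h4 := List.map_inj_left.1 h3
    ext i
    have := h4 i (List.mem_finRange i)
    omega
  calc m.factorial = Nat.card (Equiv.Perm (Fin m)) := by
        rw [Nat.card_eq_fintype_card, Fintype.card_perm, Fintype.card_fin]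
    _ ≤ popCount n := Nat.card_le_card_of_injective F hFinj

lemma popCount_ge (n : ℕ) : (n / 2).factorial ≤ popCount n := by
  rcases Nat.even_or_odd n with ⟨m, hm⟩ | ⟨m, hm⟩
  · have hm2 : n = 2 * m := by omega
    have hdiv : n / 2 = m := by omega
    rw [hdiv]
    refine construction m n [] (by simp [hm2]) (by simp) rfl
  · have hdiv : n / 2 = m := by omega
    rw [hdiv]
    refine construction m n [n] ?_ (by intro z hz; simp at hz; omega) ?_
    · rw [hm, List.range'_concat (step := 1) (s := 1) (n := 2 * m)]
      congr 2
      omega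
    · simp [popStack, descRuns]

end Aux

/-- the number of pop-stacked permutations grows superexponentially,
so its ordinary generating function has radius of convergence 0. -/
theorem statement17 :
    (∀ C : ℝ, 0 < C → ∃ N : ℕ, ∀ n ≥ N, C ^ n < (popCount n : ℝ)) ∧
    (∀ x : ℝ, 0 < x → ¬ Summable fun n : ℕ => (popCount n : ℝ) * x ^ n) := by
  have main : ∀ C : ℝ, 0 < C → ∃ N : ℕ, ∀ n ≥ N, C ^ n < (popCount n : ℝ) := by
    intro C hC
    set c : ℕ := ⌈C⌉₊ + 1 with hc
    have hCc : C < (c : ℝ) := by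
      have := Nat.le_ceil C
      push_cast [hc]
      linarith
    have hc1 : 1 ≤ c := by omega
    obtain ⟨M, hM⟩ := Filter.eventually_atTop.1 (Nat.eventually_pow_lt_factorial_sub (c ^ 3) 0)
    refine ⟨2 * M + 2, fun n hn => ?_⟩
    have hm1 : 1 ≤ n / 2 := by omega
    have hmM : M ≤ n / 2 := by omega
    have hn3 : n ≤ 3 * (n / 2) := by omega
    have hnat : c ^ n < popCount n := by
      calc c ^ n ≤ c ^ (3 * (n / 2)) := Nat.pow_le_pow_right hc1 hn3
        _ = (c ^ 3) ^ (n / 2) := by rw [← pow_mul]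
        _ < (n / 2 - 0).factorial := hM _ hmM
        _ = (n / 2).factorial := by rw [Nat.sub_zero]
        _ ≤ popCount n := popCount_ge n
    calc C ^ n < (c : ℝ) ^ n := by
          apply pow_lt_pow_left₀ hCc (le_of_lt hC)
          omega
      _ = ((c ^ n : ℕ) : ℝ) := by push_cast; ring
      _ < (popCount n : ℝ) := by exact_mod_cast hnat
  refine ⟨main, fun x hx hsum => ?_⟩
  obtain ⟨N, hN⟩ := main (1 / x) (by positivity)
  have hev : ∀ᶠ n in Filter.atTop, (1 : ℝ) ≤ (popCount n : ℝ) * x ^ n := by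
    rw [Filter.eventually_atTop]
    refine ⟨N, fun n hn => ?_⟩
    have h1 := hN n hn
    have hxn : (0 : ℝ) < x ^ n := by positivity
    rw [div_pow, one_pow, div_lt_iff₀ hxn] at h1
    linarith
  have := ge_of_tendsto hsum.tendsto_atTop_zero hev
  linarith
end
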